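/- Let p be prime and g, b, c, d, e ∈ ℤ_p nonzero with v_p(b) ≤ v_p(c) ≤ v_p(g) + max(0, v_p(e)−v_p(d)). Then the ℤ_p-submodule H = {(y,z) ∈ ℤ_p² : dy ∈ eℤ_p and gy + bz ∈ cℤ_p} equals p^{max(0,v_p(e)−v_p(d))}ℤ_p × p^{max(0,v_p(c)−v_p(b))}ℤ_p, so [ℤ_p² : H] = p^{max(0,v_p(e)−v_p(d)) + max(0,v_p(c)−v_p(b))}. -/

import Mathlib

/-- `ℤ_p`, the localization of `ℤ` at the prime `p`. -/
instance Zp.isPrime (p : ℕ) [Fact p.Prime] : (Ideal.span {(p : ℤ)}).IsPrime := by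
  rw [Ideal.span_singleton_prime (by exact_mod_cast (Fact.out : p.Prime).ne_zero)]
  exact Nat.prime_iff_prime_int.mp Fact.out

abbrev Zp (p : ℕ) [Fact p.Prime] : Type := Localization.AtPrime (Ideal.span {(p : ℤ)})

/-- Auxiliary divisibility lemma in a domain. -/
lemma aux_pow_dvd {R : Type*} [CommRing R] [IsDomain R] {q : R} (hq : q ≠ 0) (a b : ℕ)
    (y : R) : q ^ a ∣ q ^ b * y ↔ q ^ (a - b) ∣ y := by
  constructor
  · intro h
    rcases le_or_gt a b with hab | hab
    · simpa [Nat.sub_eq_zero_of_le hab] using one_dvd y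
    · obtain ⟨t, ht⟩ := h
      have hb : b ≤ a := hab.le
      have : q ^ b * y = q ^ b * (q ^ (a - b) * t) := by
        rw [ht, ← mul_assoc, ← pow_add, Nat.add_sub_cancel' hb]
      exact ⟨t, mul_left_cancel₀ (pow_ne_zero _ hq) this⟩
  · rintro ⟨t, rfl⟩
    have : q ^ b * (q ^ (a - b) * t) = q ^ (b + (a - b)) * t := by
      rw [← mul_assoc, ← pow_add]
    rw [this]
    exact dvd_mul_of_dvd_left (pow_dvd_pow _ (by omega)) t

lemma Zp.algebraMap_injective (p : ℕ) [Fact p.Prime] :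
    Function.Injective (algebraMap ℤ (Zp p)) :=
  IsLocalization.injective (Zp p) (Ideal.span {(p : ℤ)}).primeCompl_le_nonZeroDivisors

lemma Zp.p_ne_zero (p : ℕ) [Fact p.Prime] : (p : Zp p) ≠ 0 := by
  have : algebraMap ℤ (Zp p) (p : ℤ) = (p : Zp p) := by push_cast; simp
  rw [← this]
  intro h
  have := Zp.algebraMap_injective p (by simpa using h : algebraMap ℤ (Zp p) (p : ℤ)
    = algebraMap ℤ (Zp p) 0)
  exact_mod_cast (Fact.out : p.Prime).ne_zero (by exact_mod_cast this)

lemma Zp.span_pow_eq_map (p : ℕ) [Fact p.Prime] (k : ℕ) :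
    Ideal.span {(p : Zp p) ^ k} =
      Ideal.map (algebraMap ℤ (Zp p)) (Ideal.span {(p : ℤ) ^ k}) := by
  rw [Ideal.map_span, Set.image_singleton, map_pow]
  norm_cast

lemma Zp.mk'_mem_iff (p : ℕ) [Fact p.Prime] (k : ℕ) (a : ℤ)
    (s : (Ideal.span {(p : ℤ)}).primeCompl) :
    IsLocalization.mk' (Zp p) a s ∈ Ideal.span {(p : Zp p) ^ k} ↔ (p : ℤ) ^ k ∣ a := by
  rw [Zp.span_pow_eq_map, IsLocalization.mk'_mem_map_algebraMap_iff]
  have hp : Prime (p : ℤ) := Nat.prime_iff_prime_int.mp Fact.out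
  constructor
  · rintro ⟨t, ht, hta⟩
    have htp : ¬ (p : ℤ) ∣ t := by
      simpa [Ideal.primeCompl, Ideal.mem_span_singleton] using ht
    have hcop : IsCoprime ((p : ℤ) ^ k) t := (hp.coprime_iff_not_dvd.mpr htp).pow_left
    rw [Ideal.mem_span_singleton] at hta
    exact hcop.dvd_of_dvd_mul_left hta
  · intro h
    refine ⟨1, ?_, by simpa [Ideal.mem_span_singleton] using h⟩
    simp [Ideal.primeCompl, Ideal.mem_span_singleton, hp.not_dvd_one]

lemma Zp.card_quot (p : ℕ) [Fact p.Prime] (k : ℕ) :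
    Nat.card (Zp p ⧸ Ideal.span {(p : Zp p) ^ k}) = p ^ k := by
  set I : Ideal (Zp p) := Ideal.span {(p : Zp p) ^ k}
  set f : ℤ →+* Zp p ⧸ I := (Ideal.Quotient.mk I).comp (algebraMap ℤ (Zp p)) with hf
  have hp : Prime (p : ℤ) := Nat.prime_iff_prime_int.mp Fact.out
  have hker : RingHom.ker f = Ideal.span {(p : ℤ) ^ k} := by
    ext n
    rw [RingHom.mem_ker, hf, RingHom.comp_apply, Ideal.Quotient.eq_zero_iff_mem]
    have : algebraMap ℤ (Zp p) n = IsLocalization.mk' (Zp p) n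
        (1 : (Ideal.span {(p : ℤ)}).primeCompl) := by
      rw [IsLocalization.mk'_one]
    rw [this, Zp.mk'_mem_iff]
    exact (Ideal.mem_span_singleton).symm
  have hsurj : Function.Surjective f := by
    intro x
    obtain ⟨y, rfl⟩ := Ideal.Quotient.mk_surjective x
    obtain ⟨⟨a, s⟩, rfl⟩ := IsLocalization.mk'_surjective (Ideal.span {(p : ℤ)}).primeCompl y
    have hsp : ¬ (p : ℤ) ∣ (s : ℤ) :=
      fun hdvd => s.2 (Ideal.mem_span_singleton.mpr hdvd)
    have hcop : IsCoprime ((p : ℤ) ^ k) (s : ℤ) :=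
      (hp.coprime_iff_not_dvd.mpr hsp).pow_left
    obtain ⟨u, v, huv⟩ := hcop
    refine ⟨a * v, ?_⟩
    have hdiff : IsLocalization.mk' (Zp p) a s - algebraMap ℤ (Zp p) (a * v) ∈ I := by
      have heq : IsLocalization.mk' (Zp p) a s - algebraMap ℤ (Zp p) (a * v)
          = IsLocalization.mk' (Zp p) (a - a * v * s) s := by
        rw [IsLocalization.eq_mk'_iff_mul_eq, sub_mul, IsLocalization.mk'_spec,
          ← map_mul, ← map_sub]
      rw [heq, Zp.mk'_mem_iff]
      refine ⟨a * u, ?_⟩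
      have : (1 : ℤ) - v * s = u * (p : ℤ) ^ k := by linarith [huv]
      calc a - a * v * (s : ℤ) = a * (1 - v * s) := by ring
        _ = (p : ℤ) ^ k * (a * u) := by rw [this]; ring
    rw [hf, RingHom.comp_apply]
    exact (Ideal.Quotient.mk_eq_mk_iff_sub_mem _ _).mpr hdiff |>.symm
  have e1 : (ℤ ⧸ RingHom.ker f) ≃+* (Zp p ⧸ I) :=
    RingHom.quotientKerEquivOfSurjective hsurj
  have := Nat.card_congr e1.toEquiv
  rw [hker] at this
  rw [← this, Nat.card_congr (Int.quotientSpanEquivZMod ((p : ℤ) ^ k)).toEquiv,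
    Nat.card_zmod, Int.natAbs_pow, Int.natAbs_natCast]

/-- quotient of a product by a product of submodules -/
noncomputable def quotProdEquiv {R M N : Type*} [Ring R] [AddCommGroup M] [AddCommGroup N]
    [Module R M] [Module R N] (A : Submodule R M) (B : Submodule R N) :
    ((M × N) ⧸ A.prod B) ≃ₗ[R] (M ⧸ A) × (N ⧸ B) := by
  have hker : LinearMap.ker (LinearMap.prodMap A.mkQ B.mkQ) = A.prod B := by
    rw [LinearMap.ker_prodMap, Submodule.ker_mkQ, Submodule.ker_mkQ]
  exact (Submodule.quotEquivOfEq _ _ hker.symm) ≪≫ₗ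
    (LinearMap.prodMap A.mkQ B.mkQ).quotKerEquivOfSurjective (by
      rintro ⟨a, b⟩
      obtain ⟨x, hx⟩ := A.mkQ_surjective a
      obtain ⟨y, hy⟩ := B.mkQ_surjective b
      exact ⟨(x, y), by simp [hx, hy]⟩)

/-- Let `g, b, c, d, e ∈ ℤ_p` be nonzero with
`v_p(b) ≤ v_p(c) ≤ v_p(g) + max(0, v_p(e)−v_p(d))`. Then
`H = {(y,z) ∈ ℤ_p² : dy ∈ eℤ_p ∧ gy + bz ∈ cℤ_p}` equals
`p^{max(0,ve−vd)}ℤ_p × p^{max(0,vc−vb)}ℤ_p`, so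
`[ℤ_p² : H] = p^{max(0,ve−vd) + max(0,vc−vb)}` (truncated subtraction on `ℕ`). -/
theorem stmt14 (p : ℕ) [Fact p.Prime] (g b c d e : Zp p)
    (vg vb vc vd ve : ℕ)
    (hvg : Ideal.span {g} = Ideal.span {(p : Zp p) ^ vg})
    (hvb : Ideal.span {b} = Ideal.span {(p : Zp p) ^ vb})
    (hvc : Ideal.span {c} = Ideal.span {(p : Zp p) ^ vc})
    (hvd : Ideal.span {d} = Ideal.span {(p : Zp p) ^ vd})
    (hve : Ideal.span {e} = Ideal.span {(p : Zp p) ^ ve})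
    (h1 : vb ≤ vc) (h2 : vc ≤ vg + (ve - vd)) :
    {yz : Zp p × Zp p | d * yz.1 ∈ Ideal.span {e} ∧ g * yz.1 + b * yz.2 ∈ Ideal.span {c}}
      = (Submodule.prod (Ideal.span {(p : Zp p) ^ (ve - vd)}) (Ideal.span {(p : Zp p) ^ (vc - vb)})
          : Submodule (Zp p) (Zp p × Zp p)) ∧
    Nat.card ((Zp p × Zp p) ⧸
        (Submodule.prod (Ideal.span {(p : Zp p) ^ (ve - vd)}) (Ideal.span {(p : Zp p) ^ (vc - vb)})
          : Submodule (Zp p) (Zp p × Zp p)))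
      = p ^ ((ve - vd) + (vc - vb)) := by
  have hpne : (p : Zp p) ≠ 0 := Zp.p_ne_zero p
  have hag : Associated g ((p : Zp p) ^ vg) := Ideal.span_singleton_eq_span_singleton.mp hvg
  have hab : Associated b ((p : Zp p) ^ vb) := Ideal.span_singleton_eq_span_singleton.mp hvb
  have hac : Associated c ((p : Zp p) ^ vc) := Ideal.span_singleton_eq_span_singleton.mp hvc
  have had : Associated d ((p : Zp p) ^ vd) := Ideal.span_singleton_eq_span_singleton.mp hvd
  have hae : Associated e ((p : Zp p) ^ ve) := Ideal.span_singleton_eq_span_singleton.mp hve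
  constructor
  · ext ⟨y, z⟩
    simp only [Set.mem_setOf_eq, SetLike.mem_coe, Submodule.mem_prod,
      Ideal.mem_span_singleton]
    have c1 : e ∣ d * y ↔ (p : Zp p) ^ (ve - vd) ∣ y := by
      rw [hae.dvd_iff_dvd_left, (had.mul_right y).dvd_iff_dvd_right, aux_pow_dvd hpne]
    rw [c1]
    constructor
    · rintro ⟨h1', h2'⟩
      refine ⟨h1', ?_⟩
      have hgy : c ∣ g * y := by
        rw [hac.dvd_iff_dvd_left]
        calc (p : Zp p) ^ vc ∣ (p : Zp p) ^ (vg + (ve - vd)) := pow_dvd_pow _ h2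
          _ = (p : Zp p) ^ vg * (p : Zp p) ^ (ve - vd) := pow_add _ _ _
          _ ∣ g * y := mul_dvd_mul hag.symm.dvd h1'
      have hbz : c ∣ b * z := (dvd_add_right hgy).mp h2'
      rw [hac.dvd_iff_dvd_left, (hab.mul_right z).dvd_iff_dvd_right,
        aux_pow_dvd hpne] at hbz
      exact hbz
    · rintro ⟨h1', h2'⟩
      refine ⟨h1', ?_⟩
      have hgy : c ∣ g * y := by
        rw [hac.dvd_iff_dvd_left]
        calc (p : Zp p) ^ vc ∣ (p : Zp p) ^ (vg + (ve - vd)) := pow_dvd_pow _ h2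
          _ = (p : Zp p) ^ vg * (p : Zp p) ^ (ve - vd) := pow_add _ _ _
          _ ∣ g * y := mul_dvd_mul hag.symm.dvd h1'
      have hbz : c ∣ b * z := by
        rw [hac.dvd_iff_dvd_left, (hab.mul_right z).dvd_iff_dvd_right,
          aux_pow_dvd hpne]
        exact h2'
      exact dvd_add hgy hbz
  · rw [Nat.card_congr (quotProdEquiv (Ideal.span {(p : Zp p) ^ (ve - vd)})
      (Ideal.span {(p : Zp p) ^ (vc - vb)})).toEquiv, Nat.card_prod,
      Zp.card_quot, Zp.card_quot, pow_add]
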